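/- Let A, B be bounded linear operators on a complex Hilbert space H and let x ∈ H be a unit vector. Then |⟨Ax,x⟩⟨Bx,x⟩|² ≤ (1/2)(|⟨BAx,x⟩|² + ‖Ax‖²‖B*x‖²). -/

import Mathlib

open scoped InnerProductSpace

lemma key_real_aux (α β t s U V : ℝ) (hα : 0 ≤ α) (hβ : 0 ≤ β) (ht : 0 ≤ t) (hs : 0 ≤ s)
    (h1 : α * β ≤ t + s) (h2 : s ^ 2 ≤ (U - α ^ 2) * (V - β ^ 2))
    (hU : α ^ 2 ≤ U) (hV : β ^ 2 ≤ V) :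
    (α * β) ^ 2 ≤ (1 / 2) * (t ^ 2 + U * V) := by
  have hp : 0 ≤ α ^ 2 * (V - β ^ 2) := mul_nonneg (sq_nonneg α) (by linarith)
  have hq : 0 ≤ β ^ 2 * (U - α ^ 2) := mul_nonneg (sq_nonneg β) (by linarith)
  have h4 : (2 * (α * β) * s) ^ 2 ≤ (α ^ 2 * (V - β ^ 2) + β ^ 2 * (U - α ^ 2)) ^ 2 := by
    nlinarith [sq_nonneg (α ^ 2 * (V - β ^ 2) - β ^ 2 * (U - α ^ 2)),
      mul_le_mul_of_nonneg_left h2 (show (0:ℝ) ≤ 4 * (α * β) ^ 2 by positivity)]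
  have habs : 2 * (α * β) * s ≤ α ^ 2 * (V - β ^ 2) + β ^ 2 * (U - α ^ 2) := by
    nlinarith [mul_nonneg (mul_nonneg (mul_nonneg hα hβ) hs) (by norm_num : (0:ℝ) ≤ 2)]
  have key : (α * β + s) ^ 2 ≤ U * V := by nlinarith
  rcases le_or_gt (α * β) s with h | h
  · nlinarith [mul_le_mul_of_nonneg_left h (mul_nonneg hα hβ), sq_nonneg t]
  · nlinarith [sq_nonneg (α * β - s), sq_nonneg s]

theorem stmt_2 {H : Type*} [NormedAddCommGroup H] [InnerProductSpace ℂ H] [CompleteSpace H]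
    (A B : H →L[ℂ] H) (x : H) (hx : ‖x‖ = 1) :
    ‖⟪A x, x⟫_ℂ * ⟪B x, x⟫_ℂ‖ ^ 2 ≤
      (1 / 2) * (‖⟪B (A x), x⟫_ℂ‖ ^ 2 +
        ‖A x‖ ^ 2 * ‖(ContinuousLinearMap.adjoint B) x‖ ^ 2) := by
  set u := A x with hu
  set v := (ContinuousLinearMap.adjoint B) x with hv
  have hxx : ⟪x, x⟫_ℂ = 1 := by
    rw [inner_self_eq_norm_sq_to_K, hx]; norm_num
  have hBA : ⟪B u, x⟫_ℂ = ⟪u, v⟫_ℂ := by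
    rw [hv, ContinuousLinearMap.adjoint_inner_right]
  have hB : ⟪B x, x⟫_ℂ = ⟪x, v⟫_ℂ := by
    rw [hv, ContinuousLinearMap.adjoint_inner_right]
  set a := ⟪x, u⟫_ℂ with ha
  set b := ⟪x, v⟫_ℂ with hb
  have hA : ⟪A x, x⟫_ℂ = starRingEnd ℂ a := by
    rw [← hu, ha, inner_conj_symm]
  set w1 := u - a • x with hw1
  set w2 := v - b • x with hw2
  have hinner : ⟪w1, w2⟫_ℂ = ⟪u, v⟫_ℂ - starRingEnd ℂ a * b := by
    simp only [hw1, hw2, inner_sub_left, inner_sub_right, inner_smul_left, inner_smul_right,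
      hxx, ← ha, ← hb, inner_conj_symm, mul_one]
    rw [show ⟪u, x⟫_ℂ = starRingEnd ℂ a by rw [ha, inner_conj_symm]]
    ring
  have hortho1 : ⟪a • x, w1⟫_ℂ = 0 := by
    simp [hw1, inner_sub_right, inner_smul_right, inner_smul_left, hxx, ← ha]
    rw [norm_smul, hx, mul_one, Complex.mul_conj']
    ring
  have hortho2 : ⟪b • x, w2⟫_ℂ = 0 := by
    simp [hw2, inner_sub_right, inner_smul_right, inner_smul_left, hxx, ← hb]
    rw [norm_smul, hx, mul_one, Complex.mul_conj']
    ring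
  have hn1 : ‖w1‖ ^ 2 = ‖u‖ ^ 2 - ‖a‖ ^ 2 := by
    have h := norm_add_sq_eq_norm_sq_add_norm_sq_of_inner_eq_zero _ _ hortho1
    have hux : a • x + w1 = u := by rw [hw1]; abel
    rw [hux] at h
    simp only [norm_smul, hx, mul_one] at h
    nlinarith [h]
  have hn2 : ‖w2‖ ^ 2 = ‖v‖ ^ 2 - ‖b‖ ^ 2 := by
    have h := norm_add_sq_eq_norm_sq_add_norm_sq_of_inner_eq_zero _ _ hortho2
    have hvx : b • x + w2 = v := by rw [hw2]; abel
    rw [hvx] at h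
    simp only [norm_smul, hx, mul_one] at h
    nlinarith [h]
  -- key scalar identity
  have hprod : ⟪A x, x⟫_ℂ * ⟪B x, x⟫_ℂ = ⟪u, v⟫_ℂ - ⟪w1, w2⟫_ℂ := by
    rw [hA, hB, hinner]; ring
  have h1 : ‖⟪A x, x⟫_ℂ‖ * ‖⟪B x, x⟫_ℂ‖ ≤ ‖⟪B u, x⟫_ℂ‖ + ‖w1‖ * ‖w2‖ := by
    calc ‖⟪A x, x⟫_ℂ‖ * ‖⟪B x, x⟫_ℂ‖ = ‖⟪A x, x⟫_ℂ * ⟪B x, x⟫_ℂ‖ := (norm_mul _ _).symm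
    _ = ‖⟪u, v⟫_ℂ - ⟪w1, w2⟫_ℂ‖ := by rw [hprod]
    _ ≤ ‖⟪u, v⟫_ℂ‖ + ‖⟪w1, w2⟫_ℂ‖ := norm_sub_le _ _
    _ ≤ ‖⟪B u, x⟫_ℂ‖ + ‖w1‖ * ‖w2‖ := by
        rw [hBA]
        exact add_le_add_right (norm_inner_le_norm _ _) _
  have hCS1 : ‖a‖ ≤ ‖u‖ := by
    have := norm_inner_le_norm (𝕜 := ℂ) x u
    rwa [hx, one_mul] at this
  have hCS2 : ‖b‖ ≤ ‖v‖ := by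
    have := norm_inner_le_norm (𝕜 := ℂ) x v
    rwa [hx, one_mul] at this
  have hAn : ‖⟪A x, x⟫_ℂ‖ = ‖a‖ := by rw [hA]; exact RCLike.norm_conj a
  have hBn : ‖⟪B x, x⟫_ℂ‖ = ‖b‖ := by rw [hB]
  have h2 : (‖w1‖ * ‖w2‖) ^ 2 ≤ (‖u‖ ^ 2 - ‖a‖ ^ 2) * (‖v‖ ^ 2 - ‖b‖ ^ 2) := by
    rw [mul_pow, hn1, hn2]
  have hmain := key_real_aux ‖a‖ ‖b‖ ‖⟪B u, x⟫_ℂ‖ (‖w1‖ * ‖w2‖) (‖u‖ ^ 2) (‖v‖ ^ 2)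
    (norm_nonneg _) (norm_nonneg _) (norm_nonneg _)
    (mul_nonneg (norm_nonneg _) (norm_nonneg _))
    (by rw [← hAn, ← hBn]; exact h1) h2
    (by nlinarith [norm_nonneg a, norm_nonneg u]) (by nlinarith [norm_nonneg b, norm_nonneg v])
  calc ‖⟪A x, x⟫_ℂ * ⟪B x, x⟫_ℂ‖ ^ 2 = (‖a‖ * ‖b‖) ^ 2 := by rw [norm_mul, hAn, hBn]
  _ ≤ (1 / 2) * (‖⟪B u, x⟫_ℂ‖ ^ 2 + ‖u‖ ^ 2 * ‖v‖ ^ 2) := hmain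
  _ = (1 / 2) * (‖⟪B (A x), x⟫_ℂ‖ ^ 2 + ‖A x‖ ^ 2 * ‖(ContinuousLinearMap.adjoint B) x‖ ^ 2) := by
      rw [← hu, ← hv]
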